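/- Let $H$ be a real Hilbert space with ONB $\{w_n\}$ and $\lambda_n>0$ nondecreasing to infinity. Suppose a trilinear form $b$ satisfies $|b(x,y,z)| \le \|x\|_{1/2}\|y\|_{3/2}\|z\|_{1/2}$ and $|b(x,y,z)| \le \|x\|_{5/6}\|y\|_{1}\|z\|_{2/3}$, and that $b(x,y,y)=0$ for all $x,y$. Then for every $u$ with $\|u\|_{5/6}<\infty$ and every $\kappa>0$, $|b(u, u^l_\kappa, u)| \le 2\,\|u\|_{5/6}^2\, \|u^h_\kappa\|_{5/6}$, where $u^l_\kappa, u^h_\kappa$ are the low/high parts at cutoff $\kappa$ (paper's $\kappa$-power convention for the frequency inequalities). Consequently $b(u, u^l_\kappa, u) \to 0$ as $\kappa \to \infty$. -/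

import Mathlib

open Filter
set_option maxHeartbeats 1000000
open scoped ENNReal InnerProductSpace

/-- `‖v‖ₛ = (∑ λₙˢ ⟪v,wₙ⟫²)^{1/2}` valued in `[0,∞]`. -/
noncomputable def hilbNorm {H : Type*} [NormedAddCommGroup H] [InnerProductSpace ℝ H]
    (w : ℕ → H) (lam : ℕ → ℝ) (s : ℝ) (v : H) : ℝ≥0∞ :=
  (∑' n, ENNReal.ofReal (lam n ^ s * (⟪v, w n⟫_ℝ) ^ 2)) ^ (1/2 : ℝ)

lemma hilbNorm_le_of_forall {H : Type*} [NormedAddCommGroup H] [InnerProductSpace ℝ H]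
    (w : ℕ → H) (lam : ℕ → ℝ) {s t C : ℝ} (hC : 0 ≤ C) {x y : H}
    (h : ∀ n, lam n ^ s * (⟪x, w n⟫_ℝ) ^ 2 ≤ C * (lam n ^ t * (⟪y, w n⟫_ℝ) ^ 2)) :
    hilbNorm w lam s x ≤ (ENNReal.ofReal C) ^ (1/2 : ℝ) * hilbNorm w lam t y := by
  unfold hilbNorm
  rw [← ENNReal.mul_rpow_of_nonneg _ _ (by norm_num : (0:ℝ) ≤ 1/2)]
  apply ENNReal.rpow_le_rpow _ (by norm_num)
  rw [← ENNReal.tsum_mul_left]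
  refine ENNReal.tsum_le_tsum fun n => ?_
  rw [← ENNReal.ofReal_mul hC]
  exact ENNReal.ofReal_le_ofReal (h n)

theorem b_low_flux_vanishes
    {H : Type*} [NormedAddCommGroup H] [InnerProductSpace ℝ H]
    (w : ℕ → H) (hw : Orthonormal ℝ w)
    (lam : ℕ → ℝ) (hpos : ∀ n, 0 < lam n) (hmono : Monotone lam)
    (hinf : Tendsto lam atTop atTop)
    (b : H →ₗ[ℝ] H →ₗ[ℝ] H →ₗ[ℝ] ℝ)
    (hb₁ : ∀ x y z : H, ENNReal.ofReal |b x y z| ≤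
      hilbNorm w lam (1/2) x * hilbNorm w lam (3/2) y * hilbNorm w lam (1/2) z)
    (hb₂ : ∀ x y z : H, ENNReal.ofReal |b x y z| ≤
      hilbNorm w lam (5/6) x * hilbNorm w lam 1 y * hilbNorm w lam (2/3) z)
    (hanti : ∀ x y z : H, b x y z = - b x z y)
    (hzero : ∀ x y : H, b x y y = 0)
    (u : H) (hu : hilbNorm w lam (5/6) u ≠ ⊤)
    (ul uh : ℝ → H)
    (hdecomp : ∀ κ : ℝ, u = ul κ + uh κ)
    (hul : ∀ (κ : ℝ) n, ⟪ul κ, w n⟫_ℝ = if lam n ≤ κ then ⟪u, w n⟫_ℝ else 0) :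
    (∀ κ : ℝ, 0 < κ → ENNReal.ofReal |b u (ul κ) u| ≤
      2 * hilbNorm w lam (5/6) u ^ 2 * hilbNorm w lam (5/6) (uh κ)) ∧
    Tendsto (fun κ : ℝ => b u (ul κ) u) atTop (nhds 0) := by
  -- coefficients of the high part
  have huh : ∀ (κ : ℝ) n, ⟪uh κ, w n⟫_ℝ = if lam n ≤ κ then 0 else ⟪u, w n⟫_ℝ := by
    intro κ n
    have h1 : ⟪u, w n⟫_ℝ = ⟪ul κ, w n⟫_ℝ + ⟪uh κ, w n⟫_ℝ := by
      conv_lhs => rw [hdecomp κ]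
      rw [inner_add_left]
    by_cases hln : lam n ≤ κ <;> simp [hln, hul κ n] at h1 ⊢ <;> linarith
  set A : ℝ≥0∞ := hilbNorm w lam (5/6) u with hA
  -- low/high parts are dominated by u at any exponent 5/6
  have hdom : ∀ (v : H), (∀ n, ⟪v, w n⟫_ℝ = ⟪u, w n⟫_ℝ ∨ ⟪v, w n⟫_ℝ = 0) →
      hilbNorm w lam (5/6) v ≤ A := by
    intro v hv
    have h := hilbNorm_le_of_forall w lam (s := 5/6) (t := 5/6) (C := 1)
      zero_le_one (x := v) (y := u) (fun n => by
        rcases hv n with h | h <;> rw [h] <;>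
          simp [mul_nonneg (Real.rpow_nonneg (hpos n).le _) (sq_nonneg _)])
    simpa using h
  have hdoml : ∀ κ, hilbNorm w lam (5/6) (ul κ) ≤ A := fun κ =>
    hdom _ (fun n => by rw [hul κ n]; split <;> simp)
  have hdomh : ∀ κ, hilbNorm w lam (5/6) (uh κ) ≤ A := fun κ =>
    hdom _ (fun n => by rw [huh κ n]; split <;> simp)
  -- the quantitative bound
  have main : ∀ κ : ℝ, 0 < κ → ENNReal.ofReal |b u (ul κ) u| ≤
      2 * A ^ 2 * hilbNorm w lam (5/6) (uh κ) := by
    intro κ hκ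
    set L : ℝ≥0∞ := hilbNorm w lam (5/6) (ul κ)
    set Hi : ℝ≥0∞ := hilbNorm w lam (5/6) (uh κ)
    -- frequency inequalities
    have hlow : ∀ s t : ℝ, t ≤ s → hilbNorm w lam s (ul κ) ≤
        (ENNReal.ofReal (κ ^ (s - t))) ^ (1/2 : ℝ) * hilbNorm w lam t (ul κ) := by
      intro s t hst
      refine hilbNorm_le_of_forall w lam (Real.rpow_nonneg hκ.le _) fun n => ?_
      rw [hul κ n]
      by_cases hln : lam n ≤ κ
      · simp only [hln, if_true]
        have e1 : lam n ^ s = lam n ^ (s - t) * lam n ^ t := by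
          rw [← Real.rpow_add (hpos n)]; ring_nf
        have e2 : lam n ^ (s - t) ≤ κ ^ (s - t) :=
          Real.rpow_le_rpow (hpos n).le hln (by linarith)
        have e3 : (0:ℝ) ≤ lam n ^ t * (⟪u, w n⟫_ℝ) ^ 2 :=
          mul_nonneg (Real.rpow_nonneg (hpos n).le _) (sq_nonneg _)
        calc lam n ^ s * (⟪u, w n⟫_ℝ) ^ 2
            = lam n ^ (s - t) * (lam n ^ t * (⟪u, w n⟫_ℝ) ^ 2) := by rw [e1]; ring
          _ ≤ κ ^ (s - t) * (lam n ^ t * (⟪u, w n⟫_ℝ) ^ 2) :=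
              mul_le_mul_of_nonneg_right e2 e3
      · simp [hln, mul_nonneg (Real.rpow_nonneg hκ.le _)
          (mul_nonneg (Real.rpow_nonneg (hpos n).le _) (sq_nonneg _))]
    have hhigh : ∀ s t : ℝ, s ≤ t → hilbNorm w lam s (uh κ) ≤
        (ENNReal.ofReal (κ ^ (s - t))) ^ (1/2 : ℝ) * hilbNorm w lam t (uh κ) := by
      intro s t hst
      refine hilbNorm_le_of_forall w lam (Real.rpow_nonneg hκ.le _) fun n => ?_
      rw [huh κ n]
      by_cases hln : lam n ≤ κ
      · simp [hln, mul_nonneg (Real.rpow_nonneg hκ.le _)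
          (mul_nonneg (Real.rpow_nonneg (hpos n).le _) (sq_nonneg _))]
      · simp only [hln, if_false]
        have hκl : κ ≤ lam n := (not_le.mp hln).le
        have e1 : lam n ^ s = lam n ^ (s - t) * lam n ^ t := by
          rw [← Real.rpow_add (hpos n)]; ring_nf
        have e2 : lam n ^ (s - t) ≤ κ ^ (s - t) :=
          Real.rpow_le_rpow_of_nonpos hκ hκl (by linarith)
        have e3 : (0:ℝ) ≤ lam n ^ t * (⟪u, w n⟫_ℝ) ^ 2 :=
          mul_nonneg (Real.rpow_nonneg (hpos n).le _) (sq_nonneg _)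
        calc lam n ^ s * (⟪u, w n⟫_ℝ) ^ 2
            = lam n ^ (s - t) * (lam n ^ t * (⟪u, w n⟫_ℝ) ^ 2) := by rw [e1]; ring
          _ ≤ κ ^ (s - t) * (lam n ^ t * (⟪u, w n⟫_ℝ) ^ 2) :=
              mul_le_mul_of_nonneg_right e2 e3
    have hF : ∀ a c : ℝ, (ENNReal.ofReal (κ ^ a)) ^ (1/2 : ℝ) *
        (ENNReal.ofReal (κ ^ c)) ^ (1/2 : ℝ) = (ENNReal.ofReal (κ ^ (a + c))) ^ (1/2 : ℝ) := by
      intro a c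
      rw [← ENNReal.mul_rpow_of_nonneg _ _ (by norm_num : (0:ℝ) ≤ 1/2),
        ← ENNReal.ofReal_mul (Real.rpow_nonneg hκ.le a), ← Real.rpow_add hκ]
    -- decomposition
    have hsplit : b u (ul κ) u = b (ul κ) (ul κ) (uh κ) + b (uh κ) (ul κ) (uh κ) := by
      conv_lhs => rw [hdecomp κ]
      simp only [map_add, LinearMap.add_apply, hzero]
      ring
    -- term 1
    have t1 : ENNReal.ofReal |b (ul κ) (ul κ) (uh κ)| ≤ A ^ 2 * Hi := by
      calc ENNReal.ofReal |b (ul κ) (ul κ) (uh κ)|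
          ≤ hilbNorm w lam (5/6) (ul κ) * hilbNorm w lam 1 (ul κ) *
            hilbNorm w lam (2/3) (uh κ) := hb₂ _ _ _
        _ ≤ A * ((ENNReal.ofReal (κ ^ ((1:ℝ) - 5/6))) ^ (1/2 : ℝ) * L) *
            ((ENNReal.ofReal (κ ^ ((2:ℝ)/3 - 5/6))) ^ (1/2 : ℝ) * Hi) :=
            mul_le_mul' (mul_le_mul' (hdoml κ) (hlow 1 (5/6) (by norm_num)))
              (hhigh (2/3) (5/6) (by norm_num))
        _ = ((ENNReal.ofReal (κ ^ ((1:ℝ) - 5/6))) ^ (1/2 : ℝ) *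
              (ENNReal.ofReal (κ ^ ((2:ℝ)/3 - 5/6))) ^ (1/2 : ℝ)) * (A * L * Hi) := by ring
        _ = (ENNReal.ofReal (κ ^ (((1:ℝ) - 5/6) + ((2:ℝ)/3 - 5/6)))) ^ (1/2 : ℝ) *
              (A * L * Hi) := by rw [hF]
        _ = A * L * Hi := by norm_num
        _ ≤ A * A * Hi := mul_le_mul' (mul_le_mul' le_rfl (hdoml κ)) le_rfl
        _ = A ^ 2 * Hi := by ring
    -- term 2
    have t2 : ENNReal.ofReal |b (uh κ) (ul κ) (uh κ)| ≤ A ^ 2 * Hi := by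
      calc ENNReal.ofReal |b (uh κ) (ul κ) (uh κ)|
          ≤ hilbNorm w lam (1/2) (uh κ) * hilbNorm w lam (3/2) (ul κ) *
            hilbNorm w lam (1/2) (uh κ) := hb₁ _ _ _
        _ ≤ ((ENNReal.ofReal (κ ^ ((1:ℝ)/2 - 5/6))) ^ (1/2 : ℝ) * Hi) *
            ((ENNReal.ofReal (κ ^ ((3:ℝ)/2 - 5/6))) ^ (1/2 : ℝ) * L) *
            ((ENNReal.ofReal (κ ^ ((1:ℝ)/2 - 5/6))) ^ (1/2 : ℝ) * Hi) :=
            mul_le_mul' (mul_le_mul' (hhigh (1/2) (5/6) (by norm_num))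
              (hlow (3/2) (5/6) (by norm_num))) (hhigh (1/2) (5/6) (by norm_num))
        _ = ((ENNReal.ofReal (κ ^ ((1:ℝ)/2 - 5/6))) ^ (1/2 : ℝ) *
              (ENNReal.ofReal (κ ^ ((3:ℝ)/2 - 5/6))) ^ (1/2 : ℝ) *
              (ENNReal.ofReal (κ ^ ((1:ℝ)/2 - 5/6))) ^ (1/2 : ℝ)) * (Hi * L * Hi) := by ring
        _ = (ENNReal.ofReal (κ ^ ((((1:ℝ)/2 - 5/6) + ((3:ℝ)/2 - 5/6)) + ((1:ℝ)/2 - 5/6)))) ^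
              (1/2 : ℝ) * (Hi * L * Hi) := by rw [hF, hF]
        _ = Hi * L * Hi := by norm_num
        _ ≤ A * A * Hi := mul_le_mul' (mul_le_mul' (hdomh κ) (hdoml κ)) le_rfl
        _ = A ^ 2 * Hi := by ring
    calc ENNReal.ofReal |b u (ul κ) u|
        = ENNReal.ofReal |b (ul κ) (ul κ) (uh κ) + b (uh κ) (ul κ) (uh κ)| := by rw [hsplit]
      _ ≤ ENNReal.ofReal (|b (ul κ) (ul κ) (uh κ)| + |b (uh κ) (ul κ) (uh κ)|) :=
          ENNReal.ofReal_le_ofReal (abs_add_le _ _)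
      _ = ENNReal.ofReal |b (ul κ) (ul κ) (uh κ)| +
          ENNReal.ofReal |b (uh κ) (ul κ) (uh κ)| :=
          ENNReal.ofReal_add (abs_nonneg _) (abs_nonneg _)
      _ ≤ A ^ 2 * Hi + A ^ 2 * Hi := add_le_add t1 t2
      _ = 2 * A ^ 2 * Hi := by ring
  refine ⟨main, ?_⟩
  -- part 2: the limit
  set f : ℕ → ℝ≥0∞ := fun n => ENNReal.ofReal (lam n ^ (5/6 : ℝ) * (⟪u, w n⟫_ℝ) ^ 2) with hf
  have hS : ∑' n, f n ≠ ⊤ := by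
    intro h
    apply hu
    rw [hA, hilbNorm, ← hf, h, ENNReal.top_rpow_of_pos (by norm_num)]
  -- tail sums of the high part tend to zero
  have hT : Tendsto (fun κ : ℝ => ∑' n, ENNReal.ofReal
      (lam n ^ (5/6 : ℝ) * (⟪uh κ, w n⟫_ℝ) ^ 2)) atTop (nhds 0) := by
    rw [ENNReal.tendsto_nhds_zero]
    intro ε hε
    have := ENNReal.tendsto_sum_nat_add f hS
    rw [ENNReal.tendsto_nhds_zero] at this
    obtain ⟨N, hN⟩ := (this ε hε).exists
    filter_upwards [eventually_ge_atTop (lam N)] with κ hκN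
    set g : ℕ → ℝ≥0∞ := fun n => ENNReal.ofReal (lam n ^ (5/6 : ℝ) * (⟪uh κ, w n⟫_ℝ) ^ 2)
      with hg
    have hg0 : ∀ i ∈ Finset.range N, g i = 0 := by
      intro i hi
      have : lam i ≤ κ := le_trans (hmono (Finset.mem_range.mp hi).le) hκN
      simp [hg, huh κ i, this]
    have key : ∑' n, g n = ∑' k, g (k + N) := by
      rw [← Summable.sum_add_tsum_nat_add' (f := g) (k := N) ENNReal.summable, Finset.sum_eq_zero hg0, zero_add]
    calc ∑' n, g n = ∑' k, g (k + N) := key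
      _ ≤ ∑' k, f (k + N) := ENNReal.tsum_le_tsum fun k => by
          rw [hg, hf]
          by_cases h : lam (k + N) ≤ κ <;>
            simp [huh κ (k + N), h, mul_nonneg (Real.rpow_nonneg (hpos _).le _) (sq_nonneg _)]
      _ ≤ ε := hN
  have hH : Tendsto (fun κ : ℝ => hilbNorm w lam (5/6) (uh κ)) atTop (nhds 0) := by
    rw [ENNReal.tendsto_nhds_zero]
    intro ε hε
    rcases eq_or_ne ε ⊤ with rfl | hεt
    · exact Eventually.of_forall fun _ => le_top
    have hε2 : 0 < ε ^ (2:ℝ) := ENNReal.rpow_pos hε hεt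
    rw [ENNReal.tendsto_nhds_zero] at hT
    filter_upwards [hT (ε ^ (2:ℝ)) hε2] with κ hκ
    calc hilbNorm w lam (5/6) (uh κ)
        ≤ (ε ^ (2:ℝ)) ^ (1/2 : ℝ) := ENNReal.rpow_le_rpow hκ (by norm_num)
      _ = ε := by rw [← ENNReal.rpow_mul]; norm_num
  have hAne : A ≠ ⊤ := hu
  have hMne : ∀ κ : ℝ, 2 * A ^ 2 * hilbNorm w lam (5/6) (uh κ) ≠ ⊤ := by
    intro κ
    exact ENNReal.mul_ne_top (ENNReal.mul_ne_top (by simp) (by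
      simpa [pow_two] using ENNReal.mul_ne_top hAne hAne))
      (lt_of_le_of_lt (hdomh κ) (lt_top_iff_ne_top.mpr hAne)).ne
  have hM : Tendsto (fun κ : ℝ => (2 * A ^ 2 * hilbNorm w lam (5/6) (uh κ)).toReal)
      atTop (nhds 0) := by
    have h1 : Tendsto (fun κ : ℝ => 2 * A ^ 2 * hilbNorm w lam (5/6) (uh κ))
        atTop (nhds 0) := by
      have := ENNReal.Tendsto.const_mul (a := 2 * A ^ 2) hH
        (Or.inr (ENNReal.mul_ne_top (by simp)
          (by simpa [pow_two] using ENNReal.mul_ne_top hAne hAne)))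
      simpa using this
    have h2 := (ENNReal.tendsto_toReal (show (0:ℝ≥0∞) ≠ ⊤ by simp)).comp h1
    simpa only [Function.comp_def, ENNReal.toReal_zero] using h2
  have habs : Tendsto (fun κ : ℝ => |b u (ul κ) u|) atTop (nhds 0) := by
    refine squeeze_zero' (Eventually.of_forall fun κ => abs_nonneg _) ?_ hM
    filter_upwards [eventually_gt_atTop (0:ℝ)] with κ hκ
    exact (ENNReal.ofReal_le_iff_le_toReal (hMne κ)).mp (main κ hκ)
  rw [tendsto_zero_iff_abs_tendsto_zero]
  exact habs
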